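/- Define α(c,p,n,h) := n·c + n³h²/(2p(n−p)) − n|n−2p|·h·√(n²h² + 4c·p(n−p)) / (2p(n−p)) for real c ≥ 0, h ≥ 0, integers n ≥ 2 and 1 ≤ p ≤ n−1. Then the minimum of α(c,p,n,h) over p ∈ {1,…,n−1} is attained at p=1 (equivalently p=n−1), i.e. min_{1≤p≤n−1} α(c,p,n,h) = n·c + n³h²/(2(n−1)) − n(n−2)h·√(n²h²+4c(n−1))/(2(n−1)). -/

import Mathlib

/-- The pinching function
`α(c,p,n,h) = n·c + n³h²/(2p(n−p)) − n|n−2p|·h·√(n²h² + 4c·p(n−p))/(2p(n−p))`. -/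
noncomputable def pinchAlpha (c : ℝ) (p n : ℕ) (h : ℝ) : ℝ :=
  n * c + n ^ 3 * h ^ 2 / (2 * p * ((n : ℝ) - p)) -
    n * |(n : ℝ) - 2 * p| * h * Real.sqrt (n ^ 2 * h ^ 2 + 4 * c * p * ((n : ℝ) - p)) /
      (2 * p * ((n : ℝ) - p))

/-- Key algebraic representation: `α = -Nc + 2N(c+h²)·s/(s+uh)`. -/
lemma pinch_repr_real (c h N P : ℝ) (hc : 0 ≤ c) (hh : 0 < h) (hP : 1 ≤ P) (hPN : P ≤ N - 1) :
    N * c + N^3*h^2/(2*P*(N-P)) - N * |N - 2*P| * h * Real.sqrt (N^2*h^2+4*c*P*(N-P))/(2*P*(N-P))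
      = -(N*c) + 2*N*(c+h^2) * (Real.sqrt (N^2*h^2+4*c*P*(N-P)) /
          (Real.sqrt (N^2*h^2+4*c*P*(N-P)) + |N - 2*P| * h)) := by
  have hN : 2 ≤ N := by linarith
  have ht : 0 < P*(N-P) := by nlinarith
  have harg : (0:ℝ) ≤ N^2*h^2+4*c*P*(N-P) := by nlinarith
  set s := Real.sqrt (N^2*h^2+4*c*P*(N-P)) with hs
  set u := |N - 2*P| with hudef
  have hs2 : s^2 = N^2*h^2+4*c*P*(N-P) := Real.sq_sqrt harg
  have hu0 : 0 ≤ u := abs_nonneg _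
  have hu2 : u^2 = (N-2*P)^2 := sq_abs _
  have hsge : N*h ≤ s := by
    rw [hs]
    have : N*h = Real.sqrt ((N*h)^2) := (Real.sqrt_sq (by nlinarith)).symm
    rw [this]
    apply Real.sqrt_le_sqrt
    nlinarith
  have hspos : 0 < s := by nlinarith
  have hden : 0 < s + u*h := by positivity
  have hP0 : P ≠ 0 := by positivity
  have hNP0 : N - P ≠ 0 := by nlinarith
  have hden2 : s + h*u ≠ 0 := by linarith
  field_simp [hP0, hNP0, hden.ne', hden2]
  linear_combination (-(h*u)) * hs2 + (-(h^2*s)) * hu2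

lemma pinch_repr (c h : ℝ) (hc : 0 ≤ c) (hh : 0 < h) (n p : ℕ) (hp : 1 ≤ p)
    (hpn : p + 1 ≤ n) :
    pinchAlpha c p n h
      = -((n:ℝ)*c) + 2*(n:ℝ)*(c+h^2) * (Real.sqrt ((n:ℝ)^2*h^2+4*c*(p:ℝ)*((n:ℝ)-(p:ℝ))) /
          (Real.sqrt ((n:ℝ)^2*h^2+4*c*(p:ℝ)*((n:ℝ)-(p:ℝ))) + |(n:ℝ) - 2*(p:ℝ)| * h)) := by
  have hP : (1:ℝ) ≤ (p:ℝ) := by exact_mod_cast hp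
  have hPN : (p:ℝ) ≤ (n:ℝ) - 1 := by
    have : ((p:ℝ) + 1) ≤ (n:ℝ) := by exact_mod_cast hpn
    linarith
  have := pinch_repr_real c h (n:ℝ) (p:ℝ) hc hh hP hPN
  simpa [pinchAlpha] using this

lemma frac_mono (s1 s2 b1 b2 : ℝ) (hs1 : 0 < s1) (h12 : s1 ≤ s2) (hb2 : 0 ≤ b2)
    (hb : b2 ≤ b1) : s1/(s1+b1) ≤ s2/(s2+b2) := by
  have hs2 : 0 < s2 := lt_of_lt_of_le hs1 h12
  have hb1 : 0 ≤ b1 := le_trans hb2 hb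
  rw [div_le_div_iff₀ (by linarith) (by linarith)]
  nlinarith

/-- For `c ≥ 0`, `h ≥ 0` and `n ≥ 2`, the minimum of `α(c,p,n,h)` over
integers `1 ≤ p ≤ n−1` is attained at `p = 1`, and equals
`n·c + n³h²/(2(n−1)) − n(n−2)h·√(n²h²+4c(n−1))/(2(n−1))`. -/
theorem pinchAlpha_min_at_one (c h : ℝ) (hc : 0 ≤ c) (hh : 0 ≤ h) (n : ℕ) (hn : 2 ≤ n) :
    (∀ p : ℕ, 1 ≤ p → p ≤ n - 1 → pinchAlpha c 1 n h ≤ pinchAlpha c p n h) ∧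
      pinchAlpha c 1 n h =
        n * c + n ^ 3 * h ^ 2 / (2 * ((n : ℝ) - 1)) -
          n * ((n : ℝ) - 2) * h * Real.sqrt (n ^ 2 * h ^ 2 + 4 * c * ((n : ℝ) - 1)) /
            (2 * ((n : ℝ) - 1)) := by
  have hN : (2:ℝ) ≤ (n:ℝ) := by exact_mod_cast hn
  constructor
  · intro p hp1 hpn
    rcases eq_or_lt_of_le hh with h0 | hpos
    · -- h = 0 : everything is n*c
      have e : ∀ q : ℕ, pinchAlpha c q n 0 = (n:ℝ) * c := by
        intro q; simp [pinchAlpha]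
      rw [← h0, e p, e 1]
    · -- h > 0
      have hpn' : p + 1 ≤ n := by omega
      rw [pinch_repr c h hc hpos n 1 le_rfl (by omega),
          pinch_repr c h hc hpos n p hp1 hpn']
      have hP : (1:ℝ) ≤ (p:ℝ) := by exact_mod_cast hp1
      have hPN : (p:ℝ) ≤ (n:ℝ) - 1 := by
        have : ((p:ℝ) + 1) ≤ (n:ℝ) := by exact_mod_cast hpn'
        linarith
      push_cast
      apply add_le_add_right
      apply mul_le_mul_of_nonneg_left _ (by positivity)
      apply frac_mono
      · apply Real.sqrt_pos.mpr
        have hn0 : (0:ℝ) < (n:ℝ) := by linarith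
        have h1 : (0:ℝ) < (n:ℝ)^2*h^2 := by positivity
        nlinarith [h1, mul_nonneg hc (by linarith : (0:ℝ) ≤ (n:ℝ) - 1)]
      · apply Real.sqrt_le_sqrt
        nlinarith [mul_nonneg hc (mul_nonneg (by linarith : (0:ℝ) ≤ (p:ℝ) - 1)
          (by linarith : (0:ℝ) ≤ (n:ℝ) - 1 - (p:ℝ)))]
      · exact mul_nonneg (abs_nonneg _) hh
      · apply mul_le_mul_of_nonneg_right _ hh
        rw [show |(n:ℝ) - 2*1| = (n:ℝ) - 2 by
          rw [abs_of_nonneg (by linarith : (0:ℝ) ≤ (n:ℝ) - 2*1)]; ring]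
        exact abs_le.mpr ⟨by linarith, by linarith⟩
  · simp only [pinchAlpha, Nat.cast_one]
    have habs : |(n:ℝ) - 2*1| = (n:ℝ) - 2 := by
      rw [abs_of_nonneg (by linarith : (0:ℝ) ≤ (n:ℝ) - 2*1)]; ring
    have harg : (n:ℝ)^2*h^2+4*c*1*((n:ℝ)-1) = (n:ℝ)^2*h^2+4*c*((n:ℝ)-1) := by ring
    rw [habs]
    ring_nf
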